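/- Let φ be a multiplicative automorphism of I(X,R). Then there exists a coherent system c on X over R such that φ is associated with c: for every f ∈ I(X,R), (φ f) x y = c x y · f x y for all pairs x < y, and (φ f) x x = f x x for all x. -/

import Mathlib

open Finset

namespace MultAutAux

variable {X R : Type*} [Preorder X] [LocallyFiniteOrder X] [DecidableEq X] [Ring R]

open scoped Classical in
/-- The function concentrated at `(x, y)` with value `r`. -/
noncomputable def single (x y : X) (r : R) : IncidenceAlgebra R X :=
  ⟨fun a b => if a = x ∧ b = y ∧ a ≤ b then r else 0, fun a b hab => by
    rw [if_neg]; tauto⟩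

lemma single_apply {x y : X} (h : x ≤ y) (r : R) (a b : X) :
    single x y r a b = if a = x ∧ b = y then r else 0 := by
  unfold single
  rw [IncidenceAlgebra.coe_mk]
  by_cases hab : a = x ∧ b = y
  · obtain ⟨rfl, rfl⟩ := hab
    rw [if_pos ⟨rfl, rfl, h⟩, if_pos ⟨rfl, rfl⟩]
  · rw [if_neg (by tauto), if_neg hab]

lemma single_apply_self {x y : X} (h : x ≤ y) (r : R) : single x y r x y = r := by
  rw [single_apply h]; simp

lemma single_diag_supported (x : X) (r : R) :
    ∀ a b : X, a ≠ b → single x x r a b = 0 := by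
  intro a b hab
  rw [single_apply le_rfl, if_neg]
  rintro ⟨rfl, rfl⟩; exact hab rfl

lemma mul_single {x z y : X} (hxz : x ≤ z) (hzy : z ≤ y) (r s : R) :
    single x z r * single z y s = single x y (r * s) := by
  ext a b hab
  rw [IncidenceAlgebra.mul_apply, single_apply (hxz.trans hzy)]
  by_cases hax : a = x
  · subst hax
    by_cases hby : b = y
    · subst hby
      have hsum : ∀ t ∈ Icc a b, single a z r a t * single z b s t b
          = if t = z then r * s else 0 := by
        intro t _
        rw [single_apply hxz, single_apply hzy]
        by_cases htz : t = z
        · subst htz; simp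
        · rw [if_neg (by tauto), if_neg htz, zero_mul]
      rw [Finset.sum_congr rfl hsum, Finset.sum_ite_eq' (Icc a b) z fun _ => r * s,
        if_pos (mem_Icc.2 ⟨hxz, hzy⟩), if_pos ⟨rfl, rfl⟩]
    · rw [if_neg (by tauto)]
      refine Finset.sum_eq_zero fun t _ => ?_
      rw [single_apply hzy, if_neg (by tauto), mul_zero]
  · rw [if_neg (by tauto)]
    refine Finset.sum_eq_zero fun t _ => ?_
    rw [single_apply hxz, if_neg (by tauto), zero_mul]

lemma e_mul_apply (x : X) (f : IncidenceAlgebra R X) (a b : X) :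
    (single x x (1 : R) * f) a b = if a = x then f x b else 0 := by
  by_cases hab : a ≤ b
  · rw [IncidenceAlgebra.mul_apply]
    by_cases hax : a = x
    · subst hax
      have hsum : ∀ t ∈ Icc a b, single a a (1:R) a t * f t b
          = if t = a then f a b else 0 := by
        intro t _
        rw [single_apply le_rfl]
        by_cases hta : t = a
        · subst hta; simp
        · rw [if_neg (by tauto), if_neg hta, zero_mul]
      rw [Finset.sum_congr rfl hsum, Finset.sum_ite_eq' (Icc a b) a fun _ => f a b,
        if_pos (mem_Icc.2 ⟨le_rfl, hab⟩), if_pos rfl]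
    · rw [if_neg hax]
      refine Finset.sum_eq_zero fun t _ => ?_
      rw [single_apply le_rfl, if_neg (by tauto), zero_mul]
  · rw [IncidenceAlgebra.apply_eq_zero_of_not_le hab]
    by_cases hax : a = x
    · subst hax
      rw [if_pos rfl, IncidenceAlgebra.apply_eq_zero_of_not_le hab]
    · rw [if_neg hax]

lemma mul_e_apply (y : X) (f : IncidenceAlgebra R X) (a b : X) :
    (f * single y y (1 : R)) a b = if b = y then f a y else 0 := by
  by_cases hab : a ≤ b
  · rw [IncidenceAlgebra.mul_apply]
    by_cases hby : b = y
    · subst hby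
      have hsum : ∀ t ∈ Icc a b, f a t * single b b (1:R) t b
          = if t = b then f a b else 0 := by
        intro t _
        rw [single_apply le_rfl]
        by_cases htb : t = b
        · subst htb; simp
        · rw [if_neg (by tauto), mul_zero, if_neg htb]
      rw [Finset.sum_congr rfl hsum, Finset.sum_ite_eq' (Icc a b) b fun _ => f a b,
        if_pos (mem_Icc.2 ⟨hab, le_rfl⟩), if_pos rfl]
    · rw [if_neg hby]
      refine Finset.sum_eq_zero fun t _ => ?_
      rw [single_apply le_rfl, if_neg (by tauto), mul_zero]
  · rw [IncidenceAlgebra.apply_eq_zero_of_not_le hab]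
    by_cases hby : b = y
    · subst hby
      rw [if_pos rfl, IncidenceAlgebra.apply_eq_zero_of_not_le hab]
    · rw [if_neg hby]

lemma sandwich {x y : X} (h : x ≤ y) (f : IncidenceAlgebra R X) :
    single x x (1 : R) * f * single y y 1 = single x y (f x y) := by
  ext a b hab
  rw [mul_e_apply, single_apply h]
  by_cases hby : b = y
  · subst hby
    rw [e_mul_apply]
    by_cases hax : a = x
    · subst hax; simp
    · rw [if_neg hax]; simp [hax]
  · rw [if_neg hby, if_neg (by tauto)]

/-- The diagonal part of `f`. -/
def diagPart (f : IncidenceAlgebra R X) : IncidenceAlgebra R X :=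
  ⟨fun a b => if a = b then f a b else 0, fun a b hab => by
    split_ifs
    · exact IncidenceAlgebra.apply_eq_zero_of_not_le hab f
    · rfl⟩

lemma diagPart_apply (f : IncidenceAlgebra R X) (a b : X) :
    diagPart f a b = if a = b then f a b else 0 := rfl

variable (φ : RingAut (IncidenceAlgebra R X))
variable (h1 : ∀ f : IncidenceAlgebra R X, (∀ x y : X, x ≠ y → f x y = 0) → φ f = f)

include h1

lemma keyA {x y : X} (h : x ≤ y) :
    φ (single x y (1 : R)) = single x y (φ (single x y (1 : R)) x y) := by
  conv_lhs => rw [show single x y (1 : R)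
      = single x x (1:R) * single x y 1 * single y y 1 by
    rw [sandwich h, single_apply_self h]]
  rw [map_mul, map_mul, h1 _ (single_diag_supported x 1),
    h1 _ (single_diag_supported y 1), sandwich h]

lemma keyB {x y : X} (h : x ≤ y) (r : R) :
    φ (single x y r) = single x y (r * φ (single x y (1 : R)) x y) := by
  rw [show single x y r = single x x r * single x y 1 by
      rw [mul_single le_rfl h, mul_one],
    map_mul, h1 _ (single_diag_supported x r), keyA φ h1 h, mul_single le_rfl h,
    single_apply_self h]

lemma keyB' {x y : X} (h : x ≤ y) (r : R) :
    φ (single x y r) = single x y (φ (single x y (1 : R)) x y * r) := by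
  rw [show single x y r = single x y 1 * single y y r by
      rw [mul_single h le_rfl, one_mul],
    map_mul, h1 _ (single_diag_supported y r), keyA φ h1 h, mul_single h le_rfl,
    single_apply_self h]

end MultAutAux


/-- A ring automorphism of the incidence algebra is *multiplicative* if it fixes every
function supported on the diagonal and maps functions vanishing on the diagonal to
functions vanishing on the diagonal. -/
def IsMultAut {X R : Type*} [Preorder X] [LocallyFiniteOrder X] [DecidableEq X] [Ring R]
    (φ : RingAut (IncidenceAlgebra R X)) : Prop :=
  (∀ f : IncidenceAlgebra R X, (∀ x y : X, x ≠ y → f x y = 0) → φ f = f) ∧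
  (∀ f : IncidenceAlgebra R X, (∀ x : X, f x x = 0) → ∀ x : X, (φ f) x x = 0)

/-- Every multiplicative automorphism of the incidence algebra of a finite
poset is associated with a coherent system of invertible central elements
(Proposition 3.3, part 1). -/
theorem mult_aut_gives_coherent_system {X R : Type*} [PartialOrder X] [Fintype X]
    [LocallyFiniteOrder X] [DecidableEq X] [Ring R]
    (φ : RingAut (IncidenceAlgebra R X)) (hφ : IsMultAut φ) :
    ∃ c : X → X → R,
      (∀ x y : X, x < y → c x y ∈ Set.center R ∧ IsUnit (c x y)) ∧
      (∀ x z y : X, x < z → z < y → c x y = c x z * c z y) ∧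
      (∀ f : IncidenceAlgebra R X,
        (∀ x y : X, x < y → (φ f) x y = c x y * f x y) ∧
        (∀ x : X, (φ f) x x = f x x)) := by
  obtain ⟨h1, h2⟩ := hφ
  have h1' : ∀ f : IncidenceAlgebra R X, (∀ a b : X, a ≠ b → f a b = 0) → φ.symm f = f := by
    intro f hf
    conv_lhs => rw [← h1 f hf]
    exact φ.symm_apply_apply f
  refine ⟨fun x y => φ (MultAutAux.single x y (1 : R)) x y, ?_, ?_, ?_⟩
  · intro x y hxy
    have h := hxy.le
    constructor
    · rw [Semigroup.mem_center_iff]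
      intro g
      have e1 := MultAutAux.keyB φ h1 h g
      have e2 := MultAutAux.keyB' φ h1 h g
      have e3 := congrArg (fun F : IncidenceAlgebra R X => F x y) (e1.symm.trans e2)
      simpa [MultAutAux.single_apply_self h] using e3
    · set cc : R := φ (MultAutAux.single x y (1 : R)) x y with hcc
      set c' : R := φ.symm (MultAutAux.single x y (1 : R)) x y with hc'
      have hA : φ (MultAutAux.single x y (1 : R)) = MultAutAux.single x y cc := MultAutAux.keyA φ h1 h
      have hA' : φ.symm (MultAutAux.single x y (1 : R)) = MultAutAux.single x y c' := MultAutAux.keyA φ.symm h1' h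
      have hc'c : c' * cc = 1 := by
        have e : φ (MultAutAux.single x y c') = MultAutAux.single x y (c' * cc) := MultAutAux.keyB φ h1 h c'
        rw [← hA', RingEquiv.apply_symm_apply] at e
        have e3 := congrArg (fun F : IncidenceAlgebra R X => F x y) e
        simpa [MultAutAux.single_apply_self h] using e3.symm
      have hcc' : cc * c' = 1 := by
        have e : φ.symm (MultAutAux.single x y cc) = MultAutAux.single x y (cc * c') := MultAutAux.keyB φ.symm h1' h cc
        rw [← hA, RingEquiv.symm_apply_apply] at e
        have e3 := congrArg (fun F : IncidenceAlgebra R X => F x y) e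
        simpa [MultAutAux.single_apply_self h] using e3.symm
      exact ⟨⟨cc, c', hcc', hc'c⟩, rfl⟩
  · intro x z y hxz hzy
    have hxz' := hxz.le
    have hzy' := hzy.le
    have hxy' := hxz'.trans hzy'
    have e : MultAutAux.single x z (1 : R) * MultAutAux.single z y 1 = MultAutAux.single x y 1 := by
      rw [MultAutAux.mul_single hxz' hzy', one_mul]
    have e2 := congrArg φ e
    rw [map_mul, MultAutAux.keyA φ h1 hxz', MultAutAux.keyA φ h1 hzy', MultAutAux.keyA φ h1 hxy',
      MultAutAux.mul_single hxz' hzy'] at e2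
    have e3 := congrArg (fun F : IncidenceAlgebra R X => F x y) e2
    simpa [MultAutAux.single_apply_self hxy'] using e3.symm
  · intro f
    constructor
    · intro x y hxy
      have h := hxy.le
      have e : φ (MultAutAux.single x x (1 : R) * f * MultAutAux.single y y 1)
          = MultAutAux.single x x (1 : R) * φ f * MultAutAux.single y y 1 := by
        rw [map_mul, map_mul, h1 _ (MultAutAux.single_diag_supported x 1),
          h1 _ (MultAutAux.single_diag_supported y 1)]
      rw [MultAutAux.sandwich h f, MultAutAux.sandwich h (φ f), MultAutAux.keyB' φ h1 h (f x y)] at e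
      have e3 := congrArg (fun F : IncidenceAlgebra R X => F x y) e
      simpa [MultAutAux.single_apply_self h] using e3.symm
    · intro x
      have hd : φ (MultAutAux.diagPart f) = MultAutAux.diagPart f :=
        h1 _ fun a b hab => by rw [MultAutAux.diagPart_apply, if_neg hab]
      have hsub : ∀ a : X, (f - MultAutAux.diagPart f) a a = 0 := fun a => by
        rw [IncidenceAlgebra.sub_apply, MultAutAux.diagPart_apply, if_pos rfl, sub_self]
      have e := h2 (f - MultAutAux.diagPart f) hsub x
      rw [map_sub, IncidenceAlgebra.sub_apply, hd] at e
      have e2 : (φ f) x x = MultAutAux.diagPart f x x := sub_eq_zero.mp e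
      rw [e2, MultAutAux.diagPart_apply, if_pos rfl]
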